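/- Let R be a principal ideal ring and let a, b, u, v ∈ R satisfy a·b = 0 and u·a + v·b = 1. Let I ⊆ R[x₁,…,xₛ] be an ideal, and let G_a = (g_{a,k})_{k∈K} and G_b = (g_{b,l})_{l∈L} be finite families of nonzero polynomials that are strong Gröbner bases of I + a·R[x₁,…,xₛ] and of I + b·R[x₁,…,xₛ], respectively, such that: (i) for every k ∈ K, if g_{a,k} is non-constant then lc(g_{a,k}) divides a and lc(g_{a,k}) ∉ aR; (ii) for every l ∈ L, if g_{b,l} is non-constant then lc(g_{b,l}) divides b and lc(g_{b,l}) ∉ bR. For k ∈ K and l ∈ L put δ_{k,l} = lm(g_{a,k}) ⊔ lm(g_{b,l}) (componentwise maximum of exponent vectors) and define f_{k,l} = u·a·lc(g_{a,k})·X^{δ_{k,l} − lm(g_{b,l})}·g_{b,l} + v·b·lc(g_{b,l})·X^{δ_{k,l} − lm(g_{a,k})}·g_{a,k}. Then the set G = { f_{k,l} : k ∈ K, l ∈ L } is a strong Gröbner basis of I. -/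

import Mathlib

open MvPolynomial

/-- The leading monomial (largest exponent vector of the support) of a multivariate
polynomial with respect to a monomial order. -/
noncomputable def MonomialOrder.lm {σ R : Type*} [CommSemiring R] (m : MonomialOrder σ)
    (f : MvPolynomial σ R) : σ →₀ ℕ :=
  m.toSyn.symm (f.support.sup fun d => m.toSyn d)

/-- The leading coefficient of a multivariate polynomial with respect to a monomial order. -/
noncomputable def MonomialOrder.lc {σ R : Type*} [CommSemiring R] (m : MonomialOrder σ)
    (f : MvPolynomial σ R) : R :=
  f.coeff (m.lm f)

/-- `G` is a strong Gröbner basis of an ideal `I` w.r.t. the monomial order `m` if `G ⊆ I`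
and for every nonzero `f ∈ I` there is a nonzero `g ∈ G` whose leading term divides the
leading term of `f`, i.e. `lm g ≤ lm f` componentwise and `lc g ∣ lc f`. -/
def MonomialOrder.IsStrongGroebnerBasis {σ R : Type*} [CommSemiring R] (m : MonomialOrder σ)
    (G : Set (MvPolynomial σ R)) (I : Ideal (MvPolynomial σ R)) : Prop :=
  (∀ g ∈ G, g ∈ I) ∧
    ∀ f ∈ I, f ≠ 0 → ∃ g ∈ G, g ≠ 0 ∧ m.lm g ≤ m.lm f ∧ m.lc g ∣ m.lc f

section Aux

variable {σ R : Type*} [CommSemiring R] (m : MonomialOrder σ)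

lemma MonomialOrder.toSyn_lm (f : MvPolynomial σ R) :
    m.toSyn (m.lm f) = f.support.sup fun d => m.toSyn d := by
  simp [MonomialOrder.lm]

lemma MonomialOrder.le_toSyn_lm {f : MvPolynomial σ R} {d : σ →₀ ℕ} (hd : d ∈ f.support) :
    m.toSyn d ≤ m.toSyn (m.lm f) := by
  rw [m.toSyn_lm]
  exact Finset.le_sup (f := fun d => m.toSyn d) hd

lemma MonomialOrder.lc_ne_zero {f : MvPolynomial σ R} (hf : f ≠ 0) : m.lc f ≠ 0 := by
  obtain ⟨d, hd, hsup⟩ := Finset.exists_mem_eq_sup f.support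
    (MvPolynomial.support_nonempty.mpr hf) (fun d => m.toSyn d)
  have hlm : m.lm f = d := by
    rw [MonomialOrder.lm, hsup]; exact m.toSyn.symm_apply_apply d
  rw [MonomialOrder.lc, hlm]
  exact MvPolynomial.mem_support_iff.mp hd

lemma MonomialOrder.lm_eq_of {f : MvPolynomial σ R} {δ : σ →₀ ℕ}
    (h0 : f.coeff δ ≠ 0) (hle : ∀ d ∈ f.support, m.toSyn d ≤ m.toSyn δ) :
    m.lm f = δ := by
  have h1 : (f.support.sup fun d => m.toSyn d) = m.toSyn δ := by
    apply le_antisymm (Finset.sup_le hle)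
    exact Finset.le_sup (f := fun d => m.toSyn d) (MvPolynomial.mem_support_iff.mpr h0)
  rw [MonomialOrder.lm, h1]; exact m.toSyn.symm_apply_apply δ

end Aux

/-- Recombination of strong Gröbner bases: if `a·b = 0`, `u·a + v·b = 1`, and
`G_a`, `G_b` are strong Gröbner bases of `I + a·R[x]` and `I + b·R[x]` (with the stated
normalization of leading coefficients of non-constant members), then the set of
polynomials `f_{k,l} = u·a·lc(g_{a,k})·X^{δ−lm(g_{b,l})}·g_{b,l}
+ v·b·lc(g_{b,l})·X^{δ−lm(g_{a,k})}·g_{a,k}`, `δ = lm(g_{a,k}) ⊔ lm(g_{b,l})`,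
is a strong Gröbner basis of `I`. -/
theorem strongGroebnerBasis_recombination {σ R : Type*} [CommRing R] [IsPrincipalIdealRing R]
    [Finite σ] (m : MonomialOrder σ) (a b u v : R)
    (hab : a * b = 0) (huv : u * a + v * b = 1)
    (I : Ideal (MvPolynomial σ R))
    {K L : Type*} [Finite K] [Finite L]
    (ga : K → MvPolynomial σ R) (gb : L → MvPolynomial σ R)
    (hga0 : ∀ k, ga k ≠ 0) (hgb0 : ∀ l, gb l ≠ 0)
    (hGa : m.IsStrongGroebnerBasis (Set.range ga)
      (I + Ideal.span {(C a : MvPolynomial σ R)}))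
    (hGb : m.IsStrongGroebnerBasis (Set.range gb)
      (I + Ideal.span {(C b : MvPolynomial σ R)}))
    (hlca : ∀ k, (¬ ∃ c : R, ga k = C c) →
      m.lc (ga k) ∣ a ∧ m.lc (ga k) ∉ Ideal.span ({a} : Set R))
    (hlcb : ∀ l, (¬ ∃ c : R, gb l = C c) →
      m.lc (gb l) ∣ b ∧ m.lc (gb l) ∉ Ideal.span ({b} : Set R)) :
    m.IsStrongGroebnerBasis
      { f | ∃ k : K, ∃ l : L, f =
        monomial (m.lm (ga k) ⊔ m.lm (gb l) - m.lm (gb l)) (u * a * m.lc (ga k)) * gb l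
        + monomial (m.lm (ga k) ⊔ m.lm (gb l) - m.lm (ga k)) (v * b * m.lc (gb l)) * ga k }
      I := by
  classical
  have key : ∀ c : R, (v * b * c + u * a) * (u * a * c + v * b) = c := by
    intro c
    linear_combination (u * v * (c - 1) ^ 2) * hab + (c * (u * a + v * b) + c) * huv
  have kill : ∀ (d : σ →₀ ℕ) (cc w : R) (r : MvPolynomial σ R), cc * w = 0 →
      (monomial d cc : MvPolynomial σ R) * (C w * r) = 0 := by
    intro d cc w r hcw
    rw [← mul_assoc, mul_comm ((monomial d) cc) (C w), C_mul_monomial, mul_comm w cc, hcw,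
      monomial_zero, zero_mul]
  have step : ∀ (q g' : MvPolynomial σ R) (w : R),
      g' ∈ I + Ideal.span {(C w : MvPolynomial σ R)} →
      (∀ rr : MvPolynomial σ R, q * (C w * rr) = 0) → q * g' ∈ I := by
    intro q g' w hg' hq
    rw [Ideal.add_eq_sup, Submodule.mem_sup] at hg'
    obtain ⟨p, hp, qq, hqq, hpq⟩ := hg'
    rw [Ideal.mem_span_singleton] at hqq
    obtain ⟨rr, rfl⟩ := hqq
    rw [← hpq, mul_add, hq rr, add_zero]
    exact I.mul_mem_left _ hp
  constructor
  · rintro g ⟨k, l, rfl⟩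
    refine I.add_mem ?_ ?_
    · exact step _ _ b (hGb.1 _ (Set.mem_range_self l))
        (fun rr => kill _ _ _ _ (by linear_combination u * m.lc (ga k) * hab))
    · exact step _ _ a (hGa.1 _ (Set.mem_range_self k))
        (fun rr => kill _ _ _ _ (by linear_combination v * m.lc (gb l) * hab))
  · intro h hhI hh0
    have hc0 : m.lc h ≠ 0 := m.lc_ne_zero hh0
    set μ := m.lm h with hμdef
    set c := m.lc h with hcdef
    have hcμ : h.coeff μ = c := rfl
    -- common construction: pick an element of a strong GB of `I + J` dividing
    -- the leading term of `C y * h + monomial μ x`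
    have pick : ∀ (G : Set (MvPolynomial σ R)) (J : Ideal (MvPolynomial σ R)) (x y : R),
        m.IsStrongGroebnerBasis G (I + J) → (monomial μ x : MvPolynomial σ R) ∈ J →
        y * c + x ≠ 0 →
        ∃ g ∈ G, g ≠ 0 ∧ m.lm g ≤ μ ∧ m.lc g ∣ (y * c + x) := by
      intro G J x y hG hxJ hne
      set w : MvPolynomial σ R := C y * h + monomial μ x with hw
      have hcoeff : w.coeff μ = y * c + x := by
        rw [hw]
        simp [coeff_add, coeff_C_mul, coeff_monomial, hcμ]
      have hwmem : w ∈ I + J := by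
        rw [Ideal.add_eq_sup, Submodule.mem_sup]
        exact ⟨C y * h, I.mul_mem_left _ hhI, monomial μ x, hxJ, rfl⟩
      have hw0 : w ≠ 0 := by
        intro hz
        exact hne (by rw [← hcoeff, hz, coeff_zero])
      have hlmw : m.lm w = μ := by
        apply m.lm_eq_of (by rw [hcoeff]; exact hne)
        intro d hd
        rcases eq_or_ne d μ with rfl | hdμ
        · exact le_refl _
        · have hcd : w.coeff d = y * h.coeff d := by
            rw [hw]
            simp only [coeff_add, coeff_C_mul, coeff_monomial, if_neg (Ne.symm hdμ), add_zero]
          have hhd : h.coeff d ≠ 0 := by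
            intro h0
            have := MvPolynomial.mem_support_iff.mp hd
            rw [hcd, h0, mul_zero] at this
            exact this rfl
          exact m.le_toSyn_lm (MvPolynomial.mem_support_iff.mpr hhd)
      obtain ⟨g, hgG, hg0, hglm, hglc⟩ := hG.2 w hwmem hw0
      rw [hlmw] at hglm
      have hlcw : m.lc w = y * c + x := by
        rw [MonomialOrder.lc, hlmw, hcoeff]
      rw [hlcw] at hglc
      exact ⟨g, hgG, hg0, hglm, hglc⟩
    have hneA : v * b * c + u * a ≠ 0 := by
      intro hz
      exact hc0 (by rw [← key c, hz, zero_mul])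
    have hneB : u * a * c + v * b ≠ 0 := by
      intro hz
      exact hc0 (by rw [← key c, hz, mul_zero])
    obtain ⟨gA, ⟨k, rfl⟩, hk0, hklm, hklc⟩ := pick (Set.range ga) _ (u * a) (v * b) hGa
      (Ideal.mem_span_singleton.mpr ⟨monomial μ u, by rw [C_mul_monomial, mul_comm a u]⟩) hneA
    obtain ⟨gB, ⟨l, rfl⟩, hl0, hllm, hllc⟩ := pick (Set.range gb) _ (v * b) (u * a) hGb
      (Ideal.mem_span_singleton.mpr ⟨monomial μ v, by rw [C_mul_monomial, mul_comm b v]⟩) hneB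
    obtain ⟨s, hs⟩ := hklc
    obtain ⟨t, ht⟩ := hllc
    have hceq : c = (m.lc (ga k) * m.lc (gb l)) * (s * t) := by
      rw [← key c, hs, ht]; ring
    have hδb : m.lm (ga k) ⊔ m.lm (gb l) - m.lm (gb l) + m.lm (gb l)
        = m.lm (ga k) ⊔ m.lm (gb l) := tsub_add_cancel_of_le le_sup_right
    have hδa : m.lm (ga k) ⊔ m.lm (gb l) - m.lm (ga k) + m.lm (ga k)
        = m.lm (ga k) ⊔ m.lm (gb l) := tsub_add_cancel_of_le le_sup_left
    set F : MvPolynomial σ R :=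
      monomial (m.lm (ga k) ⊔ m.lm (gb l) - m.lm (gb l)) (u * a * m.lc (ga k)) * gb l
        + monomial (m.lm (ga k) ⊔ m.lm (gb l) - m.lm (ga k)) (v * b * m.lc (gb l)) * ga k
      with hF
    have h1 := coeff_monomial_mul (m.lm (gb l)) (m.lm (ga k) ⊔ m.lm (gb l) - m.lm (gb l))
      (u * a * m.lc (ga k)) (gb l)
    have h2 := coeff_monomial_mul (m.lm (ga k)) (m.lm (ga k) ⊔ m.lm (gb l) - m.lm (ga k))
      (v * b * m.lc (gb l)) (ga k)
    rw [hδb] at h1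
    rw [hδa] at h2
    have hlcb' : coeff (m.lm (gb l)) (gb l) = m.lc (gb l) := rfl
    have hlca' : coeff (m.lm (ga k)) (ga k) = m.lc (ga k) := rfl
    rw [hlcb'] at h1
    rw [hlca'] at h2
    have hcf : coeff (m.lm (ga k) ⊔ m.lm (gb l)) F = m.lc (ga k) * m.lc (gb l) := by
      rw [hF, coeff_add, h1, h2]
      linear_combination (m.lc (ga k) * m.lc (gb l)) * huv
    have hαβ : m.lc (ga k) * m.lc (gb l) ≠ 0 := by
      intro hz
      exact hc0 (by rw [hceq, hz, zero_mul])
    have hF0 : F ≠ 0 := by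
      intro hz
      exact hαβ (by rw [← hcf, hz, coeff_zero])
    have hbound : ∀ (e : σ →₀ ℕ) (r : R) (p : MvPolynomial σ R),
        e + m.lm p = m.lm (ga k) ⊔ m.lm (gb l) →
        ∀ d ∈ ((monomial e r : MvPolynomial σ R) * p).support,
          m.toSyn d ≤ m.toSyn (m.lm (ga k) ⊔ m.lm (gb l)) := by
      intro e r p hep d hd
      obtain ⟨e', he', t', ht', rfl⟩ := Finset.mem_add.mp (MvPolynomial.support_mul _ _ hd)
      have he'' : e' = e := Finset.mem_singleton.mp (MvPolynomial.support_monomial_subset he')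
      subst he''
      calc m.toSyn (e' + t') = m.toSyn e' + m.toSyn t' := map_add _ _ _
        _ ≤ m.toSyn e' + m.toSyn (m.lm p) := add_le_add le_rfl (m.le_toSyn_lm ht')
        _ = m.toSyn (e' + m.lm p) := (map_add _ _ _).symm
        _ = m.toSyn (m.lm (ga k) ⊔ m.lm (gb l)) := by rw [hep]
    have hlmF : m.lm F = m.lm (ga k) ⊔ m.lm (gb l) := by
      apply m.lm_eq_of (by rw [hcf]; exact hαβ)
      intro d hd
      rw [hF] at hd
      rcases Finset.mem_union.mp (MvPolynomial.support_add hd) with hd' | hd'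
      · exact hbound _ _ _ hδb d hd'
      · exact hbound _ _ _ hδa d hd'
    refine ⟨F, ⟨k, l, hF⟩, hF0, ?_, ?_⟩
    · rw [hlmF]
      exact sup_le hklm hllm
    · have hlcF : m.lc F = m.lc (ga k) * m.lc (gb l) := by
        rw [MonomialOrder.lc, hlmF, hcf]
      rw [hlcF]
      exact ⟨s * t, hceq⟩
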